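/- arXiv:1805.01018 — 2 statements merged into one kernel-verified Lean document; each statement's English description precedes it below -/
import Mathlib

section
/- Let A, X be bounded operators on a reproducing kernel Hilbert space with Cartesian decomposition X = H + iK satisfying HK + KH = 0. Then ber(AX ± XA*) ≤ 2‖A‖ · max(ber(H²)^{1/2}, ber(K²)^{1/2}). -/
variable {E : Type*} [NormedAddCommGroup E] [InnerProductSpace ℂ E] [CompleteSpace E] {Ω : Type*}

/-- Berezin number of `A` w.r.t. the family of normalized reproducing kernels `k`. -/
noncomputable def ber (k : Ω → E) (A : E →L[ℂ] E) : ℝ :=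
  ⨆ p : Ω, ‖(inner ℂ (A (k p)) (k p) : ℂ)‖

noncomputable def adj (A : E →L[ℂ] E) : E →L[ℂ] E := ContinuousLinearMap.adjoint A

/-- Real part `(T + T*)/2`. -/
noncomputable def reOp (T : E →L[ℂ] E) : E →L[ℂ] E := (2 : ℂ)⁻¹ • (T + adj T)

/-- Imaginary part `(T - T*)/(2i)`. -/
noncomputable def imOp (T : E →L[ℂ] E) : E →L[ℂ] E := (2 * Complex.I)⁻¹ • (T - adj T)

/-- `|X| = (X*X)^{1/2}`. -/
noncomputable def absOp (X : E →L[ℂ] E) : E →L[ℂ] E := CFC.sqrt (adj X * X)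

/-! ### Auxiliary lemmas -/

lemma bessel2 (u v f : E) (huv : (inner ℂ u v : ℂ).re = 0) :
    (inner ℂ u f : ℂ).re ^ 2 + (inner ℂ v f : ℂ).re ^ 2 ≤ max (‖u‖ ^ 2) (‖v‖ ^ 2) * ‖f‖ ^ 2 := by
  have hzero : ∀ (w g : E), w = 0 → (inner ℂ w g : ℂ).re = 0 := by
    rintro w g rfl; simp
  have hsingle : ∀ (w g : E), (inner ℂ w g : ℂ).re ^ 2 ≤ ‖w‖ ^ 2 * ‖g‖ ^ 2 := by
    intro w g
    have h1 : |(inner ℂ w g : ℂ).re| ≤ ‖w‖ * ‖g‖ :=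
      le_trans (Complex.abs_re_le_norm _) (norm_inner_le_norm (𝕜 := ℂ) w g)
    nlinarith [abs_nonneg ((inner ℂ w g : ℂ)).re, sq_abs ((inner ℂ w g : ℂ)).re]
  rcases eq_or_ne u 0 with rfl | hu
  · rw [hzero 0 f rfl]
    calc (0:ℝ)^2 + (inner ℂ v f : ℂ).re^2 = (inner ℂ v f : ℂ).re^2 := by ring
      _ ≤ ‖v‖^2 * ‖f‖^2 := hsingle v f
      _ ≤ max (‖(0:E)‖^2) (‖v‖^2) * ‖f‖^2 := by gcongr; exact le_max_right _ _
  rcases eq_or_ne v 0 with rfl | hv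
  · rw [hzero 0 f rfl]
    calc (inner ℂ u f : ℂ).re^2 + (0:ℝ)^2 = (inner ℂ u f : ℂ).re^2 := by ring
      _ ≤ ‖u‖^2 * ‖f‖^2 := hsingle u f
      _ ≤ max (‖u‖^2) (‖(0:E)‖^2) * ‖f‖^2 := by gcongr; exact le_max_left _ _
  set c := (inner ℂ u f : ℂ).re with hc
  set d := (inner ℂ v f : ℂ).re with hd
  have hu' : (0:ℝ) < ‖u‖ ^ 2 := pow_pos (norm_pos_iff.mpr hu) 2
  have hv' : (0:ℝ) < ‖v‖ ^ 2 := pow_pos (norm_pos_iff.mpr hv) 2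
  set α : ℝ := c / ‖u‖ ^ 2 with hα
  set β : ℝ := d / ‖v‖ ^ 2 with hβ
  set g : E := f - (α:ℂ) • u - (β:ℂ) • v with hg
  have h0 : (0:ℝ) ≤ (inner ℂ g g : ℂ).re := by
    have := @inner_self_nonneg ℂ E _ _ _ g
    rwa [RCLike.re_to_complex] at this
  have hvu : (inner ℂ v u : ℂ).re = 0 := by
    rw [← inner_conj_symm v u, Complex.conj_re]; exact huv
  have hfu : (inner ℂ f u : ℂ).re = c := by
    rw [← inner_conj_symm f u, Complex.conj_re]
  have hfv : (inner ℂ f v : ℂ).re = d := by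
    rw [← inner_conj_symm f v, Complex.conj_re]
  have expand : (inner ℂ g g : ℂ).re
      = ‖f‖^2 - 2*α*c - 2*β*d + α^2*‖u‖^2 + β^2*‖v‖^2 := by
    simp only [hg, inner_sub_left, inner_sub_right, inner_smul_left, inner_smul_right,
      Complex.conj_ofReal]
    simp only [inner_self_eq_norm_sq_to_K]
    simp [Complex.add_re, Complex.sub_re, Complex.mul_re, Complex.conj_re, Complex.conj_im,
      ← Complex.ofReal_pow, ← hc, ← hd, huv, hvu, hfu, hfv]
    ring
  rw [expand] at h0
  have e1 : 2*α*c = 2*(c^2/‖u‖^2) := by rw [hα]; ring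
  have e2 : 2*β*d = 2*(d^2/‖v‖^2) := by rw [hβ]; ring
  have e3 : α^2*‖u‖^2 = c^2/‖u‖^2 := by rw [hα]; field_simp
  have e4 : β^2*‖v‖^2 = d^2/‖v‖^2 := by rw [hβ]; field_simp
  have hbound : c^2/‖u‖^2 + d^2/‖v‖^2 ≤ ‖f‖^2 := by
    rw [e1, e2, e3, e4] at h0; linarith
  have h1 : ‖u‖^2 ≤ max (‖u‖^2) (‖v‖^2) := le_max_left _ _
  have m0 : (0:ℝ) ≤ max (‖u‖^2) (‖v‖^2) := le_trans hu'.le h1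
  calc c^2 + d^2 = (c^2/‖u‖^2)*‖u‖^2 + (d^2/‖v‖^2)*‖v‖^2 := by field_simp
    _ ≤ (c^2/‖u‖^2)*(max (‖u‖^2) (‖v‖^2)) + (d^2/‖v‖^2)*(max (‖u‖^2) (‖v‖^2)) := by
        gcongr <;> first
          | positivity
          | exact le_max_left _ _
          | exact le_max_right _ _
    _ = (c^2/‖u‖^2 + d^2/‖v‖^2)*(max (‖u‖^2) (‖v‖^2)) := by ring
    _ ≤ ‖f‖^2 * (max (‖u‖^2) (‖v‖^2)) := by gcongr
    _ = (max (‖u‖^2) (‖v‖^2)) * ‖f‖^2 := mul_comm _ _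

lemma adj_reOp (X : E →L[ℂ] E) : adj (reOp X) = reOp X := by
  simp only [adj, reOp, map_smulₛₗ, map_add, ContinuousLinearMap.adjoint_adjoint]
  rw [show (starRingEnd ℂ) (2:ℂ)⁻¹ = (2:ℂ)⁻¹ from by simp [Complex.ext_iff], add_comm]

lemma adj_imOp (X : E →L[ℂ] E) : adj (imOp X) = imOp X := by
  simp only [adj, imOp, map_smulₛₗ, map_sub, ContinuousLinearMap.adjoint_adjoint]
  have h1 : (starRingEnd ℂ) (2 * Complex.I)⁻¹ = -(2 * Complex.I)⁻¹ := by
    simp [Complex.ext_iff]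
  rw [h1, neg_smul, ← smul_neg, neg_sub]

lemma decompose (X : E →L[ℂ] E) : X = reOp X + Complex.I • imOp X := by
  simp only [reOp, imOp, smul_smul]
  have h1 : Complex.I * (2 * Complex.I)⁻¹ = (2:ℂ)⁻¹ := by
    field_simp [Complex.I_ne_zero]
  rw [h1, ← smul_add]
  have h2 : X + adj X + (X - adj X) = (2:ℂ) • X := by
    rw [two_smul]; abel
  rw [h2, smul_smul]
  norm_num

lemma selfadj_inner (T : E →L[ℂ] E) (hT : adj T = T) (x y : E) :
    (inner ℂ (T x) y : ℂ) = inner ℂ x (T y) := by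
  conv_rhs => rw [← hT]
  rw [adj, ContinuousLinearMap.adjoint_inner_right]

lemma ber_bdd (k : Ω → E) (hk : ∀ p, ‖k p‖ = 1) (T : E →L[ℂ] E) :
    BddAbove (Set.range fun p => ‖(inner ℂ (T (k p)) (k p) : ℂ)‖) := by
  refine ⟨‖T‖, ?_⟩
  rintro _ ⟨p, rfl⟩
  calc ‖(inner ℂ (T (k p)) (k p) : ℂ)‖ ≤ ‖T (k p)‖ * ‖k p‖ := norm_inner_le_norm _ _
    _ ≤ (‖T‖ * ‖k p‖) * ‖k p‖ := by gcongr; exact T.le_opNorm _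
    _ = ‖T‖ := by rw [hk p]; ring

lemma le_ber (k : Ω → E) (hk : ∀ p, ‖k p‖ = 1) (T : E →L[ℂ] E) (p : Ω) :
    ‖(inner ℂ (T (k p)) (k p) : ℂ)‖ ≤ ber k T :=
  le_ciSup (ber_bdd k hk T) p

lemma norm_apply_le_sqrt_ber (k : Ω → E) (hk : ∀ p, ‖k p‖ = 1) (T : E →L[ℂ] E)
    (hT : adj T = T) (p : Ω) : ‖T (k p)‖ ≤ Real.sqrt (ber k (T * T)) := by
  have h1 : (inner ℂ ((T * T) (k p)) (k p) : ℂ) = ((‖T (k p)‖^2 : ℝ) : ℂ) := by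
    rw [ContinuousLinearMap.mul_apply, selfadj_inner T hT, inner_self_eq_norm_sq_to_K]
    norm_cast
  have h2 : ‖T (k p)‖^2 ≤ ber k (T * T) := by
    have := le_ber k hk (T * T) p
    rwa [h1, Complex.norm_real, Real.norm_of_nonneg (by positivity)] at this
  calc ‖T (k p)‖ = Real.sqrt (‖T (k p)‖^2) := (Real.sqrt_sq (norm_nonneg _)).symm
    _ ≤ Real.sqrt (ber k (T * T)) := Real.sqrt_le_sqrt h2

theorem stmt3 (k : Ω → E) (hk : ∀ p, ‖k p‖ = 1) (A X : E →L[ℂ] E)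
    (h : reOp X * imOp X + imOp X * reOp X = 0) :
    ber k (A * X + X * adj A) ≤
      2 * ‖A‖ * max (Real.sqrt (ber k (reOp X * reOp X))) (Real.sqrt (ber k (imOp X * imOp X))) ∧
    ber k (A * X - X * adj A) ≤
      2 * ‖A‖ * max (Real.sqrt (ber k (reOp X * reOp X))) (Real.sqrt (ber k (imOp X * imOp X))) := by
  set H := reOp X with hH
  set K := imOp X with hK
  set M : ℝ := max (Real.sqrt (ber k (H * H))) (Real.sqrt (ber k (K * K))) with hM
  have hM0 : 0 ≤ M := le_trans (Real.sqrt_nonneg _) (le_max_left _ _)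
  have hR0 : (0:ℝ) ≤ 2 * ‖A‖ * M := by positivity
  -- pointwise estimates
  have key : ∀ p : Ω,
      ‖(inner ℂ ((A * X + X * adj A) (k p)) (k p) : ℂ)‖ ≤ 2 * ‖A‖ * M ∧
      ‖(inner ℂ ((A * X - X * adj A) (k p)) (k p) : ℂ)‖ ≤ 2 * ‖A‖ * M := by
    intro p
    set lam := k p with hlam
    set f := adj A lam with hf
    set u := H lam with hu
    set v := K lam with hv
    set a : ℂ := inner ℂ u f with ha
    set b : ℂ := inner ℂ v f with hb
    -- orthogonality of u and v (real part)
    have horth : (inner ℂ u v : ℂ).re = 0 := by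
      have h1 : (inner ℂ u v : ℂ) = inner ℂ lam (H (K lam)) := by
        rw [hu, hv, selfadj_inner H (adj_reOp X)]
      have h2 : (inner ℂ v u : ℂ) = inner ℂ lam (K (H lam)) := by
        rw [hu, hv, selfadj_inner K (adj_imOp X)]
      have h3 : (inner ℂ u v : ℂ) + inner ℂ v u = 0 := by
        rw [h1, h2, ← inner_add_right]
        have : H (K lam) + K (H lam) = ((H * K + K * H) : E →L[ℂ] E) lam := by
          simp [ContinuousLinearMap.mul_apply]
        rw [this, h, ContinuousLinearMap.zero_apply, inner_zero_right]
      have h4 : (inner ℂ v u : ℂ) = (starRingEnd ℂ) (inner ℂ u v : ℂ) :=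
        (inner_conj_symm (𝕜 := ℂ) v u).symm
      have := congrArg Complex.re h3
      rw [Complex.add_re, h4, Complex.conj_re, Complex.zero_re] at this
      linarith
    -- norms of u, v, f
    have hunorm : ‖u‖ ≤ M :=
      le_trans (norm_apply_le_sqrt_ber k hk H (adj_reOp X) p) (le_max_left _ _)
    have hvnorm : ‖v‖ ≤ M :=
      le_trans (norm_apply_le_sqrt_ber k hk K (adj_imOp X) p) (le_max_right _ _)
    have hfnorm : ‖f‖ ≤ ‖A‖ := by
      calc ‖f‖ ≤ ‖ContinuousLinearMap.adjoint A‖ * ‖lam‖ :=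
            (ContinuousLinearMap.adjoint A).le_opNorm _
        _ = ‖A‖ := by rw [hlam, hk p, ContinuousLinearMap.adjoint.norm_map]; ring
    -- the two inner products
    have hXlam : X lam = u + Complex.I • v := by
      conv_lhs => rw [decompose X]
      simp [hu, hv, hH, hK]
    have hadjX : adj X = H - Complex.I • K := by
      have e0 : adj (H + Complex.I • K) = adj H + (starRingEnd ℂ) Complex.I • adj K := by
        simp only [adj, map_add, map_smulₛₗ]
      rw [show X = H + Complex.I • K from decompose X, e0, adj_reOp X, adj_imOp X,
        Complex.conj_I, neg_smul, ← sub_eq_add_neg]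
    have hXadjlam : adj X lam = u - Complex.I • v := by
      rw [hadjX]; simp [hu, hv]
    -- the two inner products
    have i1 : (inner ℂ ((A * X) lam) lam : ℂ) = a - Complex.I * b := by
      rw [ha, hb, hf]
      rw [ContinuousLinearMap.mul_apply, ← ContinuousLinearMap.adjoint_inner_right A,
        hXlam, inner_add_left, inner_smul_left, Complex.conj_I,
        show ContinuousLinearMap.adjoint A lam = adj A lam from rfl]
      ring
    have i2 : (inner ℂ ((X * adj A) lam) lam : ℂ)
        = (starRingEnd ℂ) a - Complex.I * (starRingEnd ℂ) b := by
      rw [ha, hb, ContinuousLinearMap.mul_apply, show (adj A) lam = f from rfl,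
        ← ContinuousLinearMap.adjoint_inner_right X,
        show ContinuousLinearMap.adjoint X lam = adj X lam from rfl,
        hXadjlam, inner_sub_right, inner_smul_right,
        ← inner_conj_symm f u, ← inner_conj_symm f v]
    -- bessel bounds
    have hb1 : a.re ^ 2 + b.re ^ 2 ≤ max (‖u‖ ^ 2) (‖v‖ ^ 2) * ‖f‖ ^ 2 := by
      rw [ha, hb]
      exact bessel2 u v f horth
    have hb2 : a.im ^ 2 + b.im ^ 2 ≤ max (‖u‖ ^ 2) (‖v‖ ^ 2) * ‖f‖ ^ 2 := by
      rw [ha, hb]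
      have h5 := bessel2 u v ((-Complex.I) • f) horth
      rw [inner_smul_right, inner_smul_right] at h5
      have e5 : (-Complex.I * (inner ℂ u f : ℂ)).re = (inner ℂ u f : ℂ).im := by simp
      have e6 : (-Complex.I * (inner ℂ v f : ℂ)).re = (inner ℂ v f : ℂ).im := by simp
      have e7 : ‖(-Complex.I) • f‖ = ‖f‖ := by
        rw [norm_smul]; simp
      rwa [e5, e6, e7] at h5
    have hmax : max (‖u‖ ^ 2) (‖v‖ ^ 2) ≤ M ^ 2 :=
      max_le (pow_le_pow_left₀ (norm_nonneg u) hunorm 2)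
        (pow_le_pow_left₀ (norm_nonneg v) hvnorm 2)
    have hff : ‖f‖ ^ 2 ≤ ‖A‖ ^ 2 := pow_le_pow_left₀ (norm_nonneg f) hfnorm 2
    have common : max (‖u‖ ^ 2) (‖v‖ ^ 2) * ‖f‖ ^ 2 ≤ M ^ 2 * ‖A‖ ^ 2 :=
      mul_le_mul hmax hff (by positivity) (by positivity)
    constructor
    · -- sum
      have sum_eq : (inner ℂ ((A * X + X * adj A) lam) lam : ℂ)
          = ((2 * a.re : ℝ) : ℂ) - Complex.I * ((2 * b.re : ℝ) : ℂ) := by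
        rw [ContinuousLinearMap.add_apply, inner_add_left, i1, i2,
          ← Complex.add_conj a, ← Complex.add_conj b]
        ring
      have hSnorm : ‖(inner ℂ ((A * X + X * adj A) lam) lam : ℂ)‖ ^ 2
          = 4 * (a.re ^ 2 + b.re ^ 2) := by
        rw [sum_eq, Complex.sq_norm, Complex.normSq_apply]
        simp [Complex.sub_re, Complex.sub_im, Complex.mul_re, Complex.mul_im]
        ring
      have hsq : ‖(inner ℂ ((A * X + X * adj A) lam) lam : ℂ)‖ ^ 2 ≤ (2 * ‖A‖ * M) ^ 2 := by
        rw [hSnorm]; nlinarith [hb1, common]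
      calc ‖(inner ℂ ((A * X + X * adj A) lam) lam : ℂ)‖
          = Real.sqrt (‖(inner ℂ ((A * X + X * adj A) lam) lam : ℂ)‖ ^ 2) :=
            (Real.sqrt_sq (norm_nonneg _)).symm
        _ ≤ Real.sqrt ((2 * ‖A‖ * M) ^ 2) := Real.sqrt_le_sqrt hsq
        _ = 2 * ‖A‖ * M := Real.sqrt_sq hR0
    · -- difference
      have diff_eq : (inner ℂ ((A * X - X * adj A) lam) lam : ℂ)
          = ((2 * a.im : ℝ) : ℂ) * Complex.I - Complex.I * (((2 * b.im : ℝ) : ℂ) * Complex.I) := by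
        rw [ContinuousLinearMap.sub_apply, inner_sub_left, i1, i2,
          ← Complex.sub_conj a, ← Complex.sub_conj b]
        ring
      have hDnorm : ‖(inner ℂ ((A * X - X * adj A) lam) lam : ℂ)‖ ^ 2
          = 4 * (a.im ^ 2 + b.im ^ 2) := by
        rw [diff_eq, Complex.sq_norm, Complex.normSq_apply]
        simp [Complex.sub_re, Complex.sub_im, Complex.mul_re, Complex.mul_im]
        ring
      have hsq : ‖(inner ℂ ((A * X - X * adj A) lam) lam : ℂ)‖ ^ 2 ≤ (2 * ‖A‖ * M) ^ 2 := by
        rw [hDnorm]; nlinarith [hb2, common]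
      calc ‖(inner ℂ ((A * X - X * adj A) lam) lam : ℂ)‖
          = Real.sqrt (‖(inner ℂ ((A * X - X * adj A) lam) lam : ℂ)‖ ^ 2) :=
            (Real.sqrt_sq (norm_nonneg _)).symm
        _ ≤ Real.sqrt ((2 * ‖A‖ * M) ^ 2) := Real.sqrt_le_sqrt hsq
        _ = 2 * ‖A‖ * M := Real.sqrt_sq hR0
  constructor
  · exact Real.iSup_le (fun p => (key p).1) hR0
  · exact Real.iSup_le (fun p => (key p).2) hR0
end

section
/- Let A, B be bounded operators on a reproducing kernel Hilbert space H(Ω) with Ω ⊆ 𝔻 the unit disk. Suppose limsup_{λ→ξ₀} ‖(A − Ã(λ))* k̂_λ‖ = 0 for some boundary point ξ₀ ∈ ∂𝔻. Then limsup_{λ→ξ₀} |(AB)~(λ)| ≤ ber(A)·ber(B). In particular, if limsup_{λ→ξ₀} |(AB)~(λ)| = ber(AB), then ber(AB) ≤ ber(A)·ber(B). -/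
variable {E : Type*} [NormedAddCommGroup E] [InnerProductSpace ℂ E] [CompleteSpace E] {Ω : Type*}

lemma ber_nonneg (k : Ω → E) (A : E →L[ℂ] E) : 0 ≤ ber k A :=
  Real.iSup_nonneg fun _ => norm_nonneg _

lemma inner_le_ber (k : Ω → E) (hk : ∀ p, ‖k p‖ = 1) (A : E →L[ℂ] E) (p : Ω) :
    ‖(inner ℂ (A (k p)) (k p) : ℂ)‖ ≤ ber k A := by
  apply le_ciSup (f := fun p : Ω => ‖(inner ℂ (A (k p)) (k p) : ℂ)‖)
  refine ⟨‖A‖, ?_⟩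
  rintro _ ⟨q, rfl⟩
  calc ‖(inner ℂ (A (k q)) (k q) : ℂ)‖ ≤ ‖A (k q)‖ * ‖k q‖ := norm_inner_le_norm _ _
    _ ≤ ‖A‖ * ‖k q‖ * ‖k q‖ := by
        gcongr; exact A.le_opNorm _
    _ = ‖A‖ := by rw [hk q]; ring

theorem stmt18 (S : Set ℂ) (hS : S ⊆ Metric.ball (0 : ℂ) 1)
    (k : S → E) (hk : ∀ p, ‖k p‖ = 1) (A B : E →L[ℂ] E)
    (ξ₀ : ℂ) (hξ₀ : ξ₀ ∈ Metric.sphere (0 : ℂ) 1)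
    (hA : Filter.limsup
        (fun p : S => ‖(adj (A - (inner ℂ (A (k p)) (k p) : ℂ) • 1)) (k p)‖)
        (Filter.comap (fun p : S => (p : ℂ)) (nhds ξ₀)) = 0) :
    Filter.limsup (fun p : S => ‖(inner ℂ ((A * B) (k p)) (k p) : ℂ)‖)
        (Filter.comap (fun p : S => (p : ℂ)) (nhds ξ₀)) ≤ ber k A * ber k B ∧
    (Filter.limsup (fun p : S => ‖(inner ℂ ((A * B) (k p)) (k p) : ℂ)‖)
        (Filter.comap (fun p : S => (p : ℂ)) (nhds ξ₀)) = ber k (A * B) →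
      ber k (A * B) ≤ ber k A * ber k B) := by
  set F := Filter.comap (fun p : S => (p : ℂ)) (nhds ξ₀) with hF
  set f : S → ℝ := fun p => ‖(adj (A - (inner ℂ (A (k p)) (k p) : ℂ) • 1)) (k p)‖ with hfdef
  set g : S → ℝ := fun p => ‖(inner ℂ ((A * B) (k p)) (k p) : ℂ)‖ with hgdef
  have hCnn : 0 ≤ ber k A * ber k B := mul_nonneg (ber_nonneg k A) (ber_nonneg k B)
  have key : Filter.limsup g F ≤ ber k A * ber k B := by
    by_cases hbot : F = ⊥
    · rw [hbot]
      have h0 : Filter.limsup g (⊥ : Filter S) = 0 := by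
        rw [Filter.limsup_eq]
        have : {a : ℝ | ∀ᶠ n in (⊥ : Filter S), g n ≤ a} = Set.univ := by
          ext a; simp
        rw [this]
        exact Real.sInf_of_not_bddBelow not_bddBelow_univ
      rw [h0]; exact hCnn
    · haveI : F.NeBot := ⟨hbot⟩
      -- pointwise bound
      have hpt : ∀ p : S, g p ≤ ber k A * ber k B + ‖B‖ * f p := by
        intro p
        set a : ℂ := (inner ℂ (A (k p)) (k p) : ℂ) with ha
        have hadjsplit : ContinuousLinearMap.adjoint A (k p)
            = (adj (A - a • 1)) (k p) + (starRingEnd ℂ a) • k p := by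
          have h1 : adj (A - a • 1) = adj A - (starRingEnd ℂ a) • 1 := by
            simp only [adj, ← ContinuousLinearMap.star_eq_adjoint, star_sub, star_smul,
              star_one, Complex.star_def]
          rw [h1]
          simp [adj]
        have hsplit : (inner ℂ ((A * B) (k p)) (k p) : ℂ)
            = inner ℂ (B (k p)) ((adj (A - a • 1)) (k p))
              + (starRingEnd ℂ a) * inner ℂ (B (k p)) (k p) := by
          rw [ContinuousLinearMap.mul_apply, ← ContinuousLinearMap.adjoint_inner_right,
            hadjsplit, inner_add_right, inner_smul_right]
        have h2 : g p = ‖(inner ℂ ((A * B) (k p)) (k p) : ℂ)‖ := rfl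
        rw [h2, hsplit]
        calc ‖inner ℂ (B (k p)) ((adj (A - a • 1)) (k p))
              + (starRingEnd ℂ a) * inner ℂ (B (k p)) (k p)‖
            ≤ ‖(inner ℂ (B (k p)) ((adj (A - a • 1)) (k p)) : ℂ)‖
              + ‖(starRingEnd ℂ a) * (inner ℂ (B (k p)) (k p) : ℂ)‖ := norm_add_le _ _
          _ ≤ ‖B‖ * f p + ber k A * ber k B := by
              gcongr
              · calc ‖(inner ℂ (B (k p)) ((adj (A - a • 1)) (k p)) : ℂ)‖
                    ≤ ‖B (k p)‖ * ‖(adj (A - a • 1)) (k p)‖ := norm_inner_le_norm _ _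
                  _ ≤ ‖B‖ * f p := by
                      apply mul_le_mul _ le_rfl (norm_nonneg _) (norm_nonneg _)
                      calc ‖B (k p)‖ ≤ ‖B‖ * ‖k p‖ := B.le_opNorm _
                        _ = ‖B‖ := by rw [hk p, mul_one]
              · rw [norm_mul, RingHomIsometric.norm_map]
                exact mul_le_mul (inner_le_ber k hk A p) (inner_le_ber k hk B p)
                  (norm_nonneg _) (ber_nonneg k A)
          _ = ber k A * ber k B + ‖B‖ * f p := by ring
      -- f tends to 0
      have hfnn : ∀ p, 0 ≤ f p := fun p => norm_nonneg _
      have hfbdd : Filter.IsBoundedUnder (· ≤ ·) F f := by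
        refine Filter.isBoundedUnder_of ⟨2 * ‖A‖, ?_⟩
        intro p
        calc f p ≤ ‖adj (A - (inner ℂ (A (k p)) (k p) : ℂ) • 1)‖ * ‖k p‖ :=
              ContinuousLinearMap.le_opNorm _ _
          _ = ‖A - (inner ℂ (A (k p)) (k p) : ℂ) • 1‖ := by
              rw [hk p, mul_one, adj,
                LinearIsometryEquiv.norm_map ContinuousLinearMap.adjoint]
          _ ≤ ‖A‖ + ‖(inner ℂ (A (k p)) (k p) : ℂ) • (1 : E →L[ℂ] E)‖ := norm_sub_le _ _
          _ ≤ ‖A‖ + ‖(inner ℂ (A (k p)) (k p) : ℂ)‖ * ‖(1 : E →L[ℂ] E)‖ := by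
              rw [norm_smul]
          _ ≤ ‖A‖ + ‖A‖ * 1 := by
              gcongr
              · exact inner_le_ber k hk A p |>.trans (by
                  apply Real.iSup_le _ (norm_nonneg A)
                  intro q
                  calc ‖(inner ℂ (A (k q)) (k q) : ℂ)‖ ≤ ‖A (k q)‖ * ‖k q‖ :=
                        norm_inner_le_norm _ _
                    _ ≤ ‖A‖ * ‖k q‖ * ‖k q‖ := by gcongr; exact A.le_opNorm _
                    _ = ‖A‖ := by rw [hk q]; ring)
              · exact ContinuousLinearMap.norm_id_le
          _ = 2 * ‖A‖ := by ring
      have htend : Filter.Tendsto f F (nhds 0) := by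
        rw [Metric.tendsto_nhds]
        intro ε hε
        have hlt : Filter.limsup f F < ε := by rw [hA]; exact hε
        have := Filter.eventually_lt_of_limsup_lt hlt hfbdd
        filter_upwards [this] with p hp
        rw [Real.dist_eq, sub_zero, abs_of_nonneg (hfnn p)]
        exact hp
      have htend2 : Filter.Tendsto (fun p => ber k A * ber k B + ‖B‖ * f p) F
          (nhds (ber k A * ber k B)) := by
        have : Filter.Tendsto (fun p => ber k A * ber k B + ‖B‖ * f p) F
            (nhds (ber k A * ber k B + ‖B‖ * 0)) :=
          Filter.Tendsto.add tendsto_const_nhds (Filter.Tendsto.mul tendsto_const_nhds htend)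
        simpa using this
      have hgcb : Filter.IsCoboundedUnder (· ≤ ·) F g :=
        Filter.isCoboundedUnder_le_of_le F (x := 0) fun p => norm_nonneg _
      calc Filter.limsup g F
          ≤ Filter.limsup (fun p => ber k A * ber k B + ‖B‖ * f p) F :=
            Filter.limsup_le_limsup (Filter.Eventually.of_forall hpt) hgcb
              htend2.isBoundedUnder_le
        _ = ber k A * ber k B := htend2.limsup_eq
  exact ⟨key, fun h => by rw [← h]; exact key⟩
end
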